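/- Let A be a unital alternative *-algebra over ℂ containing a nontrivial symmetric idempotent e satisfying conditions (♠) and (♣), and let Φ : A → A be a map satisfying the *-Jordan n-derivation identity in the last two slots. Then for every a₁₂, b₁₂ ∈ A₁₂ and c₂₁, d₂₁ ∈ A₂₁ one has Φ(a₁₂b₁₂ + a₁₂*) = Φ(a₁₂b₁₂) + Φ(a₁₂*) and Φ(c₂₁d₂₁ + c₂₁*) = Φ(c₂₁d₂₁) + Φ(c₂₁*). -/

import Mathlib

/-- The Jordan `•`-product `a • b = ab + b a*`. -/
def starJordan {A : Type*} [NonAssocRing A] [StarRing A] (a b : A) : A :=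
  a * b + b * star a

/-- Left-normed iterated Jordan `•`-product of a list (empty list ↦ 0, junk value). -/
def leftStarJordan {A : Type*} [NonAssocRing A] [StarRing A] : List A → A
  | [] => 0
  | x :: xs => xs.foldl starJordan x

/-- The family `a₁ = ⋯ = a_{n-2} = 1`, `a_{n-1} = x`, `a_n = y`. -/
def lastTwoFamily {A : Type*} [One A] (n : ℕ) (x y : A) : Fin n → A :=
  fun i => if (i : ℕ) = n - 2 then x else if (i : ℕ) = n - 1 then y else 1

/-- `e₁ = e`, `e₂ = 1 - e`. -/
def peirceIdem {A : Type*} [NonAssocRing A] (e : A) : Fin 2 → A :=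
  fun i => if i = 0 then e else 1 - e

/-- Membership in the Peirce component `A_{ij}`: `eᵢ x = x` and `x eⱼ = x`. -/
def inPeirce {A : Type*} [NonAssocRing A] (e : A) (i j : Fin 2) (x : A) : Prop :=
  peirceIdem e i * x = x ∧ x * peirceIdem e j = x

/-- The inner derivation `Ξ_{y,z}(a) = y(za) − z(ya) + y(az) − (ya)z + (az)y − (ay)z`. -/
def innerDer {A : Type*} [NonAssocRing A] (y z a : A) : A :=
  y * (z * a) - z * (y * a) + y * (a * z) - (y * a) * z + (a * z) * y - (a * y) * z

section helpers

set_option linter.unusedSectionVars false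

variable {A : Type*} [NonAssocRing A] [StarRing A]

lemma nsmul_mul_left' (r : ℕ) (a b : A) : (r • a) * b = r • (a * b) := by
  induction r with
  | zero => simp
  | succ k ih => rw [succ_nsmul, succ_nsmul, add_mul, ih]

lemma mul_nsmul_right' (r : ℕ) (a b : A) : a * (r • b) = r • (a * b) := by
  induction r with
  | zero => simp
  | succ k ih => rw [succ_nsmul, succ_nsmul, mul_add, ih]

lemma sj_add_left (x x' y : A) :
    starJordan (x + x') y = starJordan x y + starJordan x' y := by
  simp only [starJordan, add_mul, mul_add, star_add]; abel

lemma sj_add_right (x y y' : A) :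
    starJordan x (y + y') = starJordan x y + starJordan x y' := by
  simp only [starJordan, add_mul, mul_add]; abel

lemma sj_sub_left (x x' y : A) :
    starJordan (x - x') y = starJordan x y - starJordan x' y := by
  simp only [starJordan, sub_mul, mul_sub, star_sub]; abel

lemma sj_sub_right (x y y' : A) :
    starJordan x (y - y') = starJordan x y - starJordan x y' := by
  simp only [starJordan, sub_mul, mul_sub]; abel

lemma sj_zero_left (y : A) : starJordan 0 y = 0 := by
  simp [starJordan]

lemma sj_zero_right (x : A) : starJordan x 0 = 0 := by
  simp [starJordan]

lemma sj_nsmul_left (r : ℕ) (x y : A) :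
    starJordan (r • x) y = r • starJordan x y := by
  simp only [starJordan, nsmul_mul_left', star_nsmul, mul_nsmul_right', smul_add]

lemma foldl_sj_nsmul (r : ℕ) (a : A) (t : List A) :
    t.foldl starJordan (r • a) = r • t.foldl starJordan a := by
  induction t generalizing a with
  | nil => rfl
  | cons b t ih => rw [List.foldl_cons, List.foldl_cons, sj_nsmul_left, ih]

lemma lsj_cons_one (L : List A) (hL : L ≠ []) :
    leftStarJordan ((1 : A) :: L) = 2 • leftStarJordan L := by
  obtain ⟨a, t, rfl⟩ := List.exists_cons_of_ne_nil hL
  show List.foldl starJordan 1 (a :: t) = 2 • List.foldl starJordan a t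
  rw [List.foldl_cons]
  have h1 : starJordan (1 : A) a = 2 • a := by
    simp [starJordan, two_smul]
  rw [h1, foldl_sj_nsmul]

lemma lsj_append_two (P : List A) (hP : P ≠ []) (x y : A) :
    leftStarJordan (P ++ [x, y]) =
      starJordan (starJordan (leftStarJordan P) x) y := by
  obtain ⟨a, t, rfl⟩ := List.exists_cons_of_ne_nil hP
  show List.foldl starJordan a (t ++ [x, y]) = _
  rw [List.foldl_append]
  rfl

lemma ofFn_split_two {α : Type*} {m : ℕ} (f : Fin (m + 2) → α) :
    List.ofFn f = (List.ofFn fun i : Fin m => f ⟨i.1, by omega⟩) ++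
      [f ⟨m, by omega⟩, f ⟨m + 1, by omega⟩] := by
  rw [List.ofFn_succ', List.ofFn_succ']
  simp only [List.concat_eq_append, List.append_assoc]
  congr 1

lemma lsj_ones (r : ℕ) :
    leftStarJordan (List.ofFn fun _ : Fin (r + 1) => (1 : A)) = 2 ^ r • (1 : A) := by
  induction r with
  | zero => simp [leftStarJordan]
  | succ s ih =>
    have h : (List.ofFn fun _ : Fin (s + 2) => (1 : A)) =
        (1 : A) :: List.ofFn fun _ : Fin (s + 1) => (1 : A) := by
      rw [List.ofFn_succ]
    rw [h, lsj_cons_one _ (by simp [List.ofFn_eq_nil_iff]), ih, smul_smul, pow_succ,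
      mul_comm]

lemma lastTwoFamily_val {m : ℕ} (x y : A) (k : Fin (m + 2)) :
    lastTwoFamily (m + 2) x y k =
      if (k : ℕ) = m then x else if (k : ℕ) = m + 1 then y else 1 := by
  simp [lastTwoFamily]

lemma famList {m : ℕ} (x y : A) :
    List.ofFn (lastTwoFamily (m + 2) x y) =
      (List.ofFn fun _ : Fin m => (1 : A)) ++ [x, y] := by
  rw [ofFn_split_two]
  congr 1
  · refine congrArg List.ofFn (funext fun i => ?_)
    rw [lastTwoFamily_val]
    have h1 : ¬((⟨i.1, by omega⟩ : Fin (m + 2)) : ℕ) = m := by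
      show ¬ (i : ℕ) = m; have := i.2; omega
    have h2 : ¬((⟨i.1, by omega⟩ : Fin (m + 2)) : ℕ) = m + 1 := by
      show ¬ (i : ℕ) = m + 1; have := i.2; omega
    rw [if_neg h1, if_neg h2]
  · rw [lastTwoFamily_val, lastTwoFamily_val]
    have h1 : ((⟨m, by omega⟩ : Fin (m + 2)) : ℕ) = m := rfl
    have h2 : ((⟨m + 1, by omega⟩ : Fin (m + 2)) : ℕ) = m + 1 := rfl
    rw [h1, h2, if_pos rfl, if_neg (by omega), if_pos rfl]

lemma prodF {m : ℕ} (x y : A) :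
    leftStarJordan (List.ofFn (lastTwoFamily (m + 2) x y)) = 2 ^ m • starJordan x y := by
  rw [famList]
  cases m with
  | zero =>
    simp only [List.ofFn_zero, List.nil_append, pow_zero, one_smul]
    rfl
  | succ r =>
    rw [lsj_append_two _ (by simp [List.ofFn_eq_nil_iff]), lsj_ones]
    have h1 : starJordan ((2 ^ r : ℕ) • (1 : A)) x = (2 ^ (r + 1) : ℕ) • x := by
      simp only [starJordan, nsmul_mul_left', star_nsmul, star_one, mul_nsmul_right',
        one_mul, mul_one]
      rw [pow_succ, mul_comm, mul_smul, two_smul]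
    rw [h1, sj_nsmul_left]

lemma upd_at_m {m : ℕ} (x y z : A) (k : Fin (m + 2)) (hk : (k : ℕ) = m) :
    Function.update (lastTwoFamily (m + 2) x y) k z = lastTwoFamily (m + 2) z y := by
  funext i
  simp only [Function.update_apply, lastTwoFamily_val, Fin.ext_iff, hk]
  split_ifs <;> first | rfl | omega

lemma upd_at_m1 {m : ℕ} (x y z : A) (k : Fin (m + 2)) (hk : (k : ℕ) = m + 1) :
    Function.update (lastTwoFamily (m + 2) x y) k z = lastTwoFamily (m + 2) x z := by
  funext i
  simp only [Function.update_apply, lastTwoFamily_val, Fin.ext_iff, hk]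
  split_ifs <;> first | rfl | omega

lemma upd_low {m : ℕ} (x y z : A) (k : Fin (m + 2)) (hk : (k : ℕ) < m) :
    List.ofFn (Function.update (lastTwoFamily (m + 2) x y) k z) =
      (List.ofFn fun i : Fin m => if (i : ℕ) = (k : ℕ) then z else 1) ++ [x, y] := by
  rw [ofFn_split_two]
  congr 1
  · refine congrArg List.ofFn (funext fun i => ?_)
    simp only [Function.update_apply, lastTwoFamily_val, Fin.ext_iff, Fin.val_mk]
    have hi2 := i.2
    split_ifs <;> first | rfl | omega
  · refine congrArg₂ (fun u v : A => [u, v]) ?_ ?_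
    · simp only [Function.update_apply, lastTwoFamily_val, Fin.ext_iff, Fin.val_mk]
      split_ifs <;> first | rfl | omega
    · simp only [Function.update_apply, lastTwoFamily_val, Fin.ext_iff, Fin.val_mk]
      split_ifs <;> first | rfl | omega

end helpers

theorem stmt_6 {A : Type*} [NonAssocRing A] [Module ℂ A]
    [SMulCommClass ℂ A A] [IsScalarTower ℂ A A] [StarRing A]
    (halt₁ : ∀ a b : A, a * a * b = a * (a * b))
    (halt₂ : ∀ a b : A, b * a * a = b * (a * a))
    (e : A) (heStar : star e = e) (heIdem : e * e = e) (he0 : e ≠ 0) (he1 : e ≠ 1)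
    (hsp : ∀ x : A, (∀ r : A, x * r * e = 0) → x = 0)
    (hcl : ∀ x : A, (∀ r : A, x * r * (1 - e) = 0) → x = 0)
    (n : ℕ) (hn : 2 ≤ n) (Φ : A → A)
    (hΦ : ∀ x y : A,
      Φ (leftStarJordan (List.ofFn (lastTwoFamily n x y))) =
        ∑ k : Fin n, leftStarJordan (List.ofFn
          (Function.update (lastTwoFamily n x y) k (Φ (lastTwoFamily n x y k))))) :
    ∀ a b c d : A, inPeirce e 0 1 a → inPeirce e 0 1 b →
      inPeirce e 1 0 c → inPeirce e 1 0 d →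
      Φ (a * b + star a) = Φ (a * b) + Φ (star a) ∧
      Φ (c * d + star c) = Φ (c * d) + Φ (star c) := by
  obtain ⟨m, rfl⟩ : ∃ m, n = m + 2 := ⟨n - 2, by omega⟩
  clear hn
  -- basic facts about e and f := 1 - e
  have hef : e * (1 - e) = 0 := by rw [mul_sub, mul_one, heIdem, sub_self]
  have hfe : (1 - e) * e = 0 := by rw [sub_mul, one_mul, heIdem, sub_self]
  have hsf : star (1 - e) = 1 - e := by rw [star_sub, star_one, heStar]
  -- scalar cancellation
  have hc2 : ((2 : ℂ) ^ m) ≠ 0 := pow_ne_zero _ two_ne_zero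
  have hcastpow : (((2 ^ m : ℕ) : ℂ)) = (2 : ℂ) ^ m := by push_cast; ring
  have cancel : ∀ z : A, (2 ^ m : ℕ) • z = 0 → z = 0 := by
    intro z hz
    have h1 : ((2 : ℂ) ^ m) • z = 0 := by
      rw [← hcastpow, Nat.cast_smul_eq_nsmul, hz]
    have h2 := congrArg (fun w => ((2 : ℂ) ^ m)⁻¹ • w) h1
    simpa [inv_smul_smul₀ hc2] using h2
  have half : ∀ z : A, z + z = 0 → z = 0 := by
    intro z hz
    have h1 : ((2 : ℂ)) • z = 0 := by rw [two_smul]; exact hz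
    have h2 := congrArg (fun w => ((2 : ℂ))⁻¹ • w) h1
    simpa [inv_smul_smul₀ (two_ne_zero (α := ℂ))] using h2
  -- the consolidated key identity
  have key : ∀ x y : A, Φ ((2 ^ m : ℕ) • starJordan x y) =
      (∑ k : Fin m, starJordan (starJordan (leftStarJordan
          (List.ofFn fun i : Fin m => if (i : ℕ) = (k : ℕ) then Φ 1 else (1 : A))) x) y)
      + (2 ^ m : ℕ) • starJordan (Φ x) y + (2 ^ m : ℕ) • starJordan x (Φ y) := by
    intro x y
    have h := hΦ x y
    rw [prodF] at h
    rw [Fin.sum_univ_castSucc, Fin.sum_univ_castSucc] at h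
    have hlv : ((Fin.last (m + 1) : Fin (m + 2)) : ℕ) = m + 1 := rfl
    have hcv : (((Fin.last m).castSucc : Fin (m + 2)) : ℕ) = m := rfl
    rw [show lastTwoFamily (m + 2) x y (Fin.last (m + 1)) = y by
      rw [lastTwoFamily_val, hlv, if_neg (by omega), if_pos rfl]] at h
    rw [upd_at_m1 x y (Φ y) (Fin.last (m + 1)) hlv] at h
    rw [show lastTwoFamily (m + 2) x y ((Fin.last m).castSucc) = x by
      rw [lastTwoFamily_val, hcv, if_pos rfl]] at h
    rw [upd_at_m x y (Φ x) ((Fin.last m).castSucc) hcv] at h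
    rw [prodF, prodF] at h
    rw [show (∑ k : Fin m, leftStarJordan (List.ofFn
        (Function.update (lastTwoFamily (m + 2) x y) (k.castSucc.castSucc)
          (Φ (lastTwoFamily (m + 2) x y (k.castSucc.castSucc)))))) =
        ∑ k : Fin m, starJordan (starJordan (leftStarJordan
          (List.ofFn fun i : Fin m => if (i : ℕ) = (k : ℕ) then Φ 1 else (1 : A))) x) y from
      Finset.sum_congr rfl fun k _ => by
        have hk : ((k.castSucc.castSucc : Fin (m + 2)) : ℕ) = (k : ℕ) := rfl
        have hklt : ((k.castSucc.castSucc : Fin (m + 2)) : ℕ) < m := by rw [hk]; exact k.2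
        rw [show lastTwoFamily (m + 2) x y (k.castSucc.castSucc) = 1 by
          rw [lastTwoFamily_val, hk]
          have := k.2
          rw [if_neg (by omega), if_neg (by omega)]]
        rw [upd_low x y (Φ 1) _ hklt]
        rw [lsj_append_two _ (by
          have := k.2
          simp only [ne_eq, List.ofFn_eq_nil_iff]
          omega), hk]] at h
    exact h
  -- Φ(0) = 0
  have L0 : Φ 0 = 0 := by
    have h := key 0 0
    rw [sj_zero_left, smul_zero] at h
    simpa [sj_zero_right, sj_zero_left, smul_zero] using h
  -- biadditivity of the correction sum
  have Wadd1 : ∀ x x' y : A,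
      (∑ k : Fin m, starJordan (starJordan (leftStarJordan
          (List.ofFn fun i : Fin m => if (i : ℕ) = (k : ℕ) then Φ 1 else (1 : A))) (x + x')) y)
      = (∑ k : Fin m, starJordan (starJordan (leftStarJordan
          (List.ofFn fun i : Fin m => if (i : ℕ) = (k : ℕ) then Φ 1 else (1 : A))) x) y)
      + (∑ k : Fin m, starJordan (starJordan (leftStarJordan
          (List.ofFn fun i : Fin m => if (i : ℕ) = (k : ℕ) then Φ 1 else (1 : A))) x') y) := by
    intro x x' y
    rw [← Finset.sum_add_distrib]
    exact Finset.sum_congr rfl fun k _ => by rw [sj_add_right, sj_add_left]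
  have Wadd2 : ∀ x y y' : A,
      (∑ k : Fin m, starJordan (starJordan (leftStarJordan
          (List.ofFn fun i : Fin m => if (i : ℕ) = (k : ℕ) then Φ 1 else (1 : A))) x) (y + y'))
      = (∑ k : Fin m, starJordan (starJordan (leftStarJordan
          (List.ofFn fun i : Fin m => if (i : ℕ) = (k : ℕ) then Φ 1 else (1 : A))) x) y)
      + (∑ k : Fin m, starJordan (starJordan (leftStarJordan
          (List.ofFn fun i : Fin m => if (i : ℕ) = (k : ℕ) then Φ 1 else (1 : A))) x) y') := by
    intro x y y'
    rw [← Finset.sum_add_distrib]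
    exact Finset.sum_congr rfl fun k _ => by rw [sj_add_right]
  -- first-slot collapse
  have FS : ∀ u v y : A, starJordan v y = 0 →
      starJordan (Φ (u + v) - Φ u - Φ v) y = 0 := by
    intro u v y hvy
    have e1 := key (u + v) y
    have e2 := key u y
    have e3 := key v y
    rw [hvy, smul_zero, L0] at e3
    rw [show starJordan (u + v) y = starJordan u y by rw [sj_add_left, hvy, add_zero],
      Wadd1, sj_add_left u v (Φ y), smul_add] at e1
    apply cancel
    rw [sj_sub_left, sj_sub_left, smul_sub, smul_sub]
    linear_combination (norm := abel1) e2 + e3 - e1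
  -- second-slot collapse
  have SS : ∀ x p q : A, starJordan x p = 0 →
      starJordan x (Φ (p + q) - Φ p - Φ q) = 0 := by
    intro x p q hxp
    have e1 := key x (p + q)
    have e2 := key x q
    have e3 := key x p
    rw [hxp, smul_zero, L0] at e3
    rw [show starJordan x (p + q) = starJordan x q by rw [sj_add_right, hxp, zero_add],
      Wadd2, sj_add_right (Φ x) p q, smul_add] at e1
    apply cancel
    rw [sj_sub_right, sj_sub_right, smul_sub, smul_sub]
    linear_combination (norm := abel1) e2 + e3 - e1
  -- linearized alternativity
  have alt1 : ∀ x y z : A, (x * y) * z + (y * x) * z = x * (y * z) + y * (x * z) := by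
    intro x y z
    have h := halt₁ (x + y) z
    simp only [add_mul, mul_add] at h
    linear_combination (norm := abel1) h - halt₁ x z - halt₁ y z
  have alt2 : ∀ x y z : A, (x * y) * z + (x * z) * y = x * (y * z) + x * (z * y) := by
    intro x y z
    have h := halt₂ (y + z) x
    simp only [add_mul, mul_add] at h
    linear_combination (norm := abel1) h - halt₂ y x - halt₂ z x
  -- Peirce multiplication rules
  have pmA : ∀ u w : A, e * u = u → u * e = 0 → e * w = w → w * e = 0 →
      e * (u * w) = 0 ∧ (u * w) * e = u * w := by
    intro u w hu1 hu2 hw1 hw2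
    constructor
    · have h := alt1 e u w
      rw [hu1, hu2, zero_mul, hw1, add_zero] at h
      exact right_eq_add.mp h
    · have h := alt2 u w e
      rw [hu2, zero_mul, hw2, mul_zero, hw1, add_zero, zero_add] at h
      exact h
  have pmB : ∀ u v : A, e * u = u → u * e = 0 → e * v = 0 → v * e = v →
      e * (u * v) = u * v ∧ (u * v) * e = u * v := by
    intro u v hu1 hu2 hv1 hv2
    constructor
    · have h := alt1 e u v
      rw [hu1, hu2, zero_mul, hv1, mul_zero, add_zero, add_zero] at h
      exact h.symm
    · have h := alt2 u v e
      rw [hu2, zero_mul, hv2, hv1, mul_zero, add_zero, add_zero] at h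
      exact h
  have pmC : ∀ p q : A, e * p = 0 → p * e = p → e * q = 0 → q * e = q →
      e * (p * q) = p * q ∧ (p * q) * e = 0 := by
    intro p q hp1 hp2 hq1 hq2
    constructor
    · have h := alt1 e p q
      rw [hp1, zero_mul, hp2, hq1, mul_zero, zero_add, add_zero] at h
      exact h.symm
    · have h := alt2 p q e
      rw [hp2, hq2, hq1, mul_zero, add_zero] at h
      exact add_eq_right.mp h
  have pmD : ∀ p w : A, e * p = 0 → p * e = p → e * w = w → w * e = 0 →
      e * (p * w) = 0 ∧ (p * w) * e = 0 := by
    intro p w hp1 hp2 hw1 hw2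
    constructor
    · have h := alt1 e p w
      rw [hp1, zero_mul, hp2, hw1, zero_add] at h
      exact right_eq_add.mp h
    · have h := alt2 p w e
      rw [hp2, hw2, mul_zero, hw1, zero_add] at h
      exact add_eq_right.mp h
  -- additivity: off-diagonal + diagonal
  have Dclaim : ∀ u v : A, e * u + u * e = u →
      ((e * v = v ∧ v * e = v) ∨ (e * v = 0 ∧ v * e = 0)) →
      Φ (u + v) = Φ u + Φ v := by
    intro u v hu hv
    have hx0u : starJordan (e - (1 - e)) u = 0 := by
      show (e - (1 - e)) * u + u * star (e - (1 - e)) = 0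
      rw [star_sub, heStar, hsf]
      simp only [sub_mul, mul_sub, one_mul, mul_one]
      linear_combination (norm := abel1) hu + hu
    have R2 := SS (e - (1 - e)) u v hx0u
    have E2 : (e - (1 - e)) * (Φ (u + v) - Φ u - Φ v)
        + (Φ (u + v) - Φ u - Φ v) * (e - (1 - e)) = 0 := by
      have h := R2
      simp only [starJordan, star_sub, heStar, hsf, star_add, star_one] at h
      exact h
    rcases hv with ⟨hv1, hv2⟩ | ⟨hv1, hv2⟩
    · have hfv : starJordan (1 - e) v = 0 := by
        show (1 - e) * v + v * star (1 - e) = 0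
        rw [hsf]
        simp only [sub_mul, mul_sub, one_mul, mul_one]
        linear_combination (norm := abel1) - hv1 - hv2
      have R1 := SS (1 - e) v u hfv
      rw [show v + u = u + v from add_comm v u] at R1
      have E1 : (1 - e) * (Φ (u + v) - Φ v - Φ u)
          + (Φ (u + v) - Φ v - Φ u) * (1 - e) = 0 := by
        have h := R1
        simp only [starJordan, hsf] at h
        exact h
      have hz : (Φ (u + v) - Φ u - Φ v) + (Φ (u + v) - Φ u - Φ v) = 0 := by
        simp only [sub_mul, mul_sub, one_mul, mul_one] at E1 E2
        linear_combination (norm := abel1) E1 + E1 + E2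
      have h0 := half _ hz
      rw [sub_sub, sub_eq_zero] at h0
      exact h0
    · have hev : starJordan e v = 0 := by
        show e * v + v * star e = 0
        rw [heStar, hv1, hv2, add_zero]
      have R1 := SS e v u hev
      rw [show v + u = u + v from add_comm v u] at R1
      have E1 : e * (Φ (u + v) - Φ v - Φ u)
          + (Φ (u + v) - Φ v - Φ u) * e = 0 := by
        have h := R1
        simp only [starJordan, heStar] at h
        exact h
      have hz : (Φ (u + v) - Φ u - Φ v) + (Φ (u + v) - Φ u - Φ v) = 0 := by
        simp only [sub_mul, mul_sub, one_mul, mul_one] at E1 E2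
        linear_combination (norm := abel1) E1 + E1 - E2
      have h0 := half _ hz
      rw [sub_sub, sub_eq_zero] at h0
      exact h0
  -- additivity: A12 + A21
  have OD : ∀ u v : A, e * u = u → u * e = 0 → e * v = 0 → v * e = v →
      Φ (u + v) = Φ u + Φ v := by
    intro u v hu1 hu2 hv1 hv2
    have hsu1 : e * star u = 0 := by rw [← heStar, ← star_mul, hu2, star_zero]
    have hsv1 : e * star v = star v := by rw [← heStar, ← star_mul, hv2]
    have hsv2 : star v * e = 0 := by rw [← heStar, ← star_mul, hv1, star_zero]
    have hue : starJordan u e = 0 := by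
      show u * e + e * star u = 0
      rw [hu2, hsu1, add_zero]
    have hvf : starJordan v (1 - e) = 0 := by
      show v * (1 - e) + (1 - e) * star v = 0
      rw [mul_sub, sub_mul, mul_one, one_mul, hv2, hsv1, sub_self, sub_self, add_zero]
    have hx0u : starJordan (e - (1 - e)) u = 0 := by
      show (e - (1 - e)) * u + u * star (e - (1 - e)) = 0
      rw [star_sub, heStar, hsf]
      simp only [sub_mul, mul_sub, one_mul, mul_one]
      linear_combination (norm := abel1) hu1 + hu1 + hu2 + hu2
    have R1 := FS v u e hue
    have R2 := FS u v (1 - e) hvf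
    have R3 := SS (e - (1 - e)) u v hx0u
    rw [show v + u = u + v from add_comm v u] at R1
    have hre : Φ (u + v) - Φ v - Φ u = Φ (u + v) - Φ u - Φ v := by abel
    rw [hre] at R1
    have E1 : (Φ (u + v) - Φ u - Φ v) * e + e * star (Φ (u + v) - Φ u - Φ v) = 0 := by
      have h := R1
      simp only [starJordan, heStar] at h
      exact h
    have E2 : (Φ (u + v) - Φ u - Φ v) * (1 - e)
        + (1 - e) * star (Φ (u + v) - Φ u - Φ v) = 0 := by
      have h := R2
      simp only [starJordan, hsf] at h
      exact h
    have E3 : (e - (1 - e)) * (Φ (u + v) - Φ u - Φ v)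
        + (Φ (u + v) - Φ u - Φ v) * (e - (1 - e)) = 0 := by
      have h := R3
      simp only [starJordan, star_sub, heStar, hsf] at h
      exact h
    set d : A := Φ (u + v) - Φ u - Φ v with hd
    have hstar : star d = - d := by
      have h4 : d + star d = 0 := by
        simp only [mul_sub, sub_mul, mul_one, one_mul] at E2
        linear_combination (norm := abel1) E1 + E2
      linear_combination (norm := abel1) h4
    have hcomm : d * e = e * d := by
      rw [hstar, mul_neg] at E1
      linear_combination (norm := abel1) E1
    have h4 : e * d + e * d + e * d + e * d = d + d := by
      simp only [mul_sub, sub_mul, mul_one, one_mul] at E3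
      linear_combination (norm := abel1) E3 - hcomm - hcomm
    have h5 : e * d + e * d = 0 := by
      have h := congrArg (fun w => e * w) h4
      simp only [mul_add] at h
      have hee : e * (e * d) = e * d := by rw [← halt₁ e d, heIdem]
      rw [hee] at h
      linear_combination (norm := abel1) h
    have h6 : e * d = 0 := half _ h5
    have h7 : d + d = 0 := by
      rw [h6] at h4
      simpa using h4.symm
    have h8 := half _ h7
    rw [hd, sub_sub, sub_eq_zero] at h8
    exact h8
  -- scaled main identity for A12
  have K7 : ∀ u w : A, e * u = u → u * e = 0 → e * w = w → w * e = 0 →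
      Φ ((2 ^ m : ℕ) • (u * w + star u)) =
        Φ ((2 ^ m : ℕ) • (u * w)) + Φ ((2 ^ m : ℕ) • star u) := by
    intro u w hu1 hu2 hw1 hw2
    have hsu1 : e * star u = 0 := by rw [← heStar, ← star_mul, hu2, star_zero]
    have hsu2 : star u * e = star u := by rw [← heStar, ← star_mul, hu1]
    obtain ⟨hm1l, hm1r⟩ := pmA u w hu1 hu2 hw1 hw2
    obtain ⟨hm2l, hm2r⟩ := pmB w (star u) hw1 hw2 hsu1 hsu2
    have hDf : Φ (w + (1 - e)) = Φ w + Φ (1 - e) :=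
      Dclaim w (1 - e) (by rw [hw1, hw2, add_zero]) (Or.inr ⟨hef, hfe⟩)
    have e1 := key u (w + (1 - e))
    have e2 := key u w
    have e3 := key u (1 - e)
    rw [sj_add_right u w (1 - e), Wadd2,
      sj_add_right (Φ u) w (1 - e),
      smul_add ((2 ^ m : ℕ)) (starJordan (Φ u) w) (starJordan (Φ u) (1 - e)), hDf,
      sj_add_right u (Φ w) (Φ (1 - e)),
      smul_add ((2 ^ m : ℕ)) (starJordan u (Φ w)) (starJordan u (Φ (1 - e)))] at e1
    have hA : Φ ((2 ^ m : ℕ) • (starJordan u w + starJordan u (1 - e))) =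
        Φ ((2 ^ m : ℕ) • starJordan u w) + Φ ((2 ^ m : ℕ) • starJordan u (1 - e)) := by
      rw [e2, e3]
      linear_combination (norm := abel1) e1
    have hsjw : starJordan u w = u * w + w * star u := rfl
    have hsjf : starJordan u (1 - e) = u + star u := by
      show u * (1 - e) + (1 - e) * star u = u + star u
      rw [mul_sub, sub_mul, mul_one, one_mul, hu2, hsu1, sub_zero, sub_zero]
    rw [hsjw, hsjf] at hA
    have harg1 : (2 ^ m : ℕ) • (u * w + w * star u + (u + star u)) =
        ((2 ^ m : ℕ) • u + (2 ^ m : ℕ) • (u * w + star u)) + (2 ^ m : ℕ) • (w * star u) := by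
      simp only [smul_add]; abel
    have hsplit1 : Φ ((2 ^ m : ℕ) • (u * w + w * star u + (u + star u))) =
        Φ ((2 ^ m : ℕ) • u + (2 ^ m : ℕ) • (u * w + star u))
          + Φ ((2 ^ m : ℕ) • (w * star u)) := by
      rw [harg1]
      refine Dclaim _ _ ?_ (Or.inl ⟨?_, ?_⟩)
      · simp only [mul_add, add_mul, mul_nsmul_right', nsmul_mul_left', hu1, hu2,
          hm1l, hm1r, hsu1, hsu2, smul_zero, add_zero, zero_add]
      · rw [mul_nsmul_right', hm2l]
      · rw [nsmul_mul_left', hm2r]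
    have hsplit1' : Φ ((2 ^ m : ℕ) • u + (2 ^ m : ℕ) • (u * w + star u)) =
        Φ ((2 ^ m : ℕ) • u) + Φ ((2 ^ m : ℕ) • (u * w + star u)) := by
      refine OD _ _ ?_ ?_ ?_ ?_
      · rw [mul_nsmul_right', hu1]
      · rw [nsmul_mul_left', hu2, smul_zero]
      · rw [mul_nsmul_right', mul_add, hm1l, hsu1, add_zero, smul_zero]
      · rw [nsmul_mul_left', add_mul, hm1r, hsu2]
    have hsplit2 : Φ ((2 ^ m : ℕ) • (u * w + w * star u)) =
        Φ ((2 ^ m : ℕ) • (u * w)) + Φ ((2 ^ m : ℕ) • (w * star u)) := by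
      rw [smul_add]
      refine Dclaim _ _ ?_ (Or.inl ⟨?_, ?_⟩)
      · rw [mul_nsmul_right', nsmul_mul_left', hm1l, hm1r, smul_zero, zero_add]
      · rw [mul_nsmul_right', hm2l]
      · rw [nsmul_mul_left', hm2r]
    have hsplit3 : Φ ((2 ^ m : ℕ) • (u + star u)) =
        Φ ((2 ^ m : ℕ) • u) + Φ ((2 ^ m : ℕ) • star u) := by
      rw [smul_add]
      refine OD _ _ ?_ ?_ ?_ ?_
      · rw [mul_nsmul_right', hu1]
      · rw [nsmul_mul_left', hu2, smul_zero]
      · rw [mul_nsmul_right', hsu1, smul_zero]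
      · rw [nsmul_mul_left', hsu2]
    linear_combination (norm := abel1) hA - hsplit1 - hsplit1' + hsplit2 + hsplit3
  -- scaled main identity for A21
  have K7' : ∀ p q : A, e * p = 0 → p * e = p → e * q = 0 → q * e = q →
      Φ ((2 ^ m : ℕ) • (p * q + star p)) =
        Φ ((2 ^ m : ℕ) • (p * q)) + Φ ((2 ^ m : ℕ) • star p) := by
    intro p q hp1 hp2 hq1 hq2
    have hsp1 : e * star p = star p := by rw [← heStar, ← star_mul, hp2]
    have hsp2 : star p * e = 0 := by rw [← heStar, ← star_mul, hp1, star_zero]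
    obtain ⟨hm1l, hm1r⟩ := pmC p q hp1 hp2 hq1 hq2
    obtain ⟨hm2l, hm2r⟩ := pmD q (star p) hq1 hq2 hsp1 hsp2
    have hDf : Φ (q + e) = Φ q + Φ e :=
      Dclaim q e (by rw [hq1, hq2, zero_add]) (Or.inl ⟨heIdem, heIdem⟩)
    have e1 := key p (q + e)
    have e2 := key p q
    have e3 := key p e
    rw [sj_add_right p q e, Wadd2,
      sj_add_right (Φ p) q e,
      smul_add ((2 ^ m : ℕ)) (starJordan (Φ p) q) (starJordan (Φ p) e), hDf,
      sj_add_right p (Φ q) (Φ e),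
      smul_add ((2 ^ m : ℕ)) (starJordan p (Φ q)) (starJordan p (Φ e))] at e1
    have hA : Φ ((2 ^ m : ℕ) • (starJordan p q + starJordan p e)) =
        Φ ((2 ^ m : ℕ) • starJordan p q) + Φ ((2 ^ m : ℕ) • starJordan p e) := by
      rw [e2, e3]
      linear_combination (norm := abel1) e1
    have hsjq : starJordan p q = p * q + q * star p := rfl
    have hsje : starJordan p e = p + star p := by
      show p * e + e * star p = p + star p
      rw [hp2, hsp1]
    rw [hsjq, hsje] at hA
    have harg1 : (2 ^ m : ℕ) • (p * q + q * star p + (p + star p)) =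
        ((2 ^ m : ℕ) • (p * q + star p) + (2 ^ m : ℕ) • p) + (2 ^ m : ℕ) • (q * star p) := by
      simp only [smul_add]; abel
    have hsplit1 : Φ ((2 ^ m : ℕ) • (p * q + q * star p + (p + star p))) =
        Φ ((2 ^ m : ℕ) • (p * q + star p) + (2 ^ m : ℕ) • p)
          + Φ ((2 ^ m : ℕ) • (q * star p)) := by
      rw [harg1]
      refine Dclaim _ _ ?_ (Or.inr ⟨?_, ?_⟩)
      · simp only [mul_add, add_mul, mul_nsmul_right', nsmul_mul_left', hp1, hp2,
          hm1l, hm1r, hsp1, hsp2, smul_zero, add_zero, zero_add]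
      · rw [mul_nsmul_right', hm2l, smul_zero]
      · rw [nsmul_mul_left', hm2r, smul_zero]
    have hsplit1' : Φ ((2 ^ m : ℕ) • (p * q + star p) + (2 ^ m : ℕ) • p) =
        Φ ((2 ^ m : ℕ) • (p * q + star p)) + Φ ((2 ^ m : ℕ) • p) := by
      refine OD _ _ ?_ ?_ ?_ ?_
      · rw [mul_nsmul_right', mul_add, hm1l, hsp1]
      · rw [nsmul_mul_left', add_mul, hm1r, hsp2, add_zero, smul_zero]
      · rw [mul_nsmul_right', hp1, smul_zero]
      · rw [nsmul_mul_left', hp2]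
    have hsplit2 : Φ ((2 ^ m : ℕ) • (p * q + q * star p)) =
        Φ ((2 ^ m : ℕ) • (p * q)) + Φ ((2 ^ m : ℕ) • (q * star p)) := by
      rw [smul_add]
      refine Dclaim _ _ ?_ (Or.inr ⟨?_, ?_⟩)
      · rw [mul_nsmul_right', nsmul_mul_left', hm1l, hm1r, smul_zero, add_zero]
      · rw [mul_nsmul_right', hm2l, smul_zero]
      · rw [nsmul_mul_left', hm2r, smul_zero]
    have hsplit3 : Φ ((2 ^ m : ℕ) • (p + star p)) =
        Φ ((2 ^ m : ℕ) • p) + Φ ((2 ^ m : ℕ) • star p) := by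
      rw [smul_add]
      have h := OD ((2 ^ m : ℕ) • star p) ((2 ^ m : ℕ) • p) ?h1 ?h2 ?h3 ?h4
      · rw [add_comm ((2 ^ m : ℕ) • p) ((2 ^ m : ℕ) • star p), h,
          add_comm (Φ ((2 ^ m : ℕ) • star p)) (Φ ((2 ^ m : ℕ) • p))]
      case h1 => rw [mul_nsmul_right', hsp1]
      case h2 => rw [nsmul_mul_left', hsp2, smul_zero]
      case h3 => rw [mul_nsmul_right', hp1, smul_zero]
      case h4 => rw [nsmul_mul_left', hp2]
    linear_combination (norm := abel1) hA - hsplit1 - hsplit1' + hsplit2 + hsplit3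
  -- descale and conclude
  intro a b p q ha hb hp hq
  obtain ⟨ha1, ha2⟩ := ha
  obtain ⟨hb1, hb2⟩ := hb
  obtain ⟨hp1, hp2⟩ := hp
  obtain ⟨hq1, hq2⟩ := hq
  have hpi0 : peirceIdem e 0 = e := by simp [peirceIdem]
  have hpi1 : peirceIdem e 1 = 1 - e := by simp [peirceIdem]
  rw [hpi0] at ha1 hb1 hp2 hq2
  rw [hpi1] at ha2 hb2 hp1 hq1
  have hae : a * e = 0 := by
    rw [mul_sub, mul_one] at ha2
    exact sub_eq_self.mp ha2
  have hbe : b * e = 0 := by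
    rw [mul_sub, mul_one] at hb2
    exact sub_eq_self.mp hb2
  have hep : e * p = 0 := by
    rw [sub_mul, one_mul] at hp1
    exact sub_eq_self.mp hp1
  have heq' : e * q = 0 := by
    rw [sub_mul, one_mul] at hq1
    exact sub_eq_self.mp hq1
  have hscal : ∀ z : A, (2 ^ m : ℕ) • (((2 : ℂ) ^ m)⁻¹ • z) = z := by
    intro z
    rw [← Nat.cast_smul_eq_nsmul ℂ, hcastpow, smul_smul, mul_inv_cancel₀ hc2, one_smul]
  constructor
  · set a' : A := ((2 : ℂ) ^ m)⁻¹ • a with ha'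
    have hsa : (2 ^ m : ℕ) • a' = a := hscal a
    have ha'1 : e * a' = a' := by rw [ha', mul_smul_comm, ha1]
    have ha'2 : a' * e = 0 := by rw [ha', smul_mul_assoc, hae, smul_zero]
    have h := K7 a' b ha'1 ha'2 hb1 hbe
    rw [smul_add, ← nsmul_mul_left', ← star_nsmul, hsa] at h
    exact h
  · set p' : A := ((2 : ℂ) ^ m)⁻¹ • p with hp'
    have hsa : (2 ^ m : ℕ) • p' = p := hscal p
    have hp'1 : e * p' = 0 := by rw [hp', mul_smul_comm, hep, smul_zero]
    have hp'2 : p' * e = p' := by rw [hp', smul_mul_assoc, hp2]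
    have h := K7' p' q hp'1 hp'2 heq' hq2
    rw [smul_add, ← nsmul_mul_left', ← star_nsmul, hsa] at h
    exact h
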